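/- Let (ξ_n, ξ_n')_{n∈ℤ} be a sequence of pairwise disjoint geodesics in the hyperbolic plane such that for all n, the geodesics (ξ_m, ξ_m') with m > n all lie on one side of (ξ_n, ξ_n') and those with m < n lie on the other side (i.e., the corresponding boundary intervals [ξ_n, ξ_n'] not containing ξ_0, ξ_0' are nested for n → +∞ and for n → −∞). Then there exist distinct points ξ_{+∞}, ξ_{−∞} on the boundary circle ∂∞ℍ such that the geodesic from ξ_{−∞} to ξ_{+∞} crosses every geodesic (ξ_n, ξ_n'), and crosses them in order of increasing n. -/

import Mathlib

open Complex

/-- The unit circle, the boundary at infinity of the Poincaré disk. -/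
def BdryCircle : Set ℂ := {z : ℂ | ‖z‖ = 1}

/-- For `a ≠ b` on the unit circle, the hyperbolic geodesic with ideal endpoints
`a, b` separates the disk and the circle the same way as the Euclidean chord
through `a` and `b`.  `SameSideChord a b c d` says that `c` and `d` lie strictly
on the same side of that chord. -/
def SameSideChord (a b c d : ℂ) : Prop :=
  0 < (((c - a) / (b - a)).im) * (((d - a) / (b - a)).im)

/-- `c` and `d` lie strictly on opposite sides of the geodesic (chord) `(a,b)`;
for boundary points this says the geodesic `(c,d)` crosses the geodesic `(a,b)`. -/
def SeparatedByChord (a b c d : ℂ) : Prop :=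
  (((c - a) / (b - a)).im) * (((d - a) / (b - a)).im) < 0

lemma sgn_pp {a b c : ℝ} (h1 : 0 < a*c) (h2 : 0 < b*c) : 0 < a*b := by
  nlinarith [mul_pos h1 h2, sq_nonneg c]

lemma sgn_nn {a b c : ℝ} (h1 : a*c < 0) (h2 : b*c < 0) : 0 < a*b := by
  nlinarith [mul_pos (neg_pos.mpr h1) (neg_pos.mpr h2), sq_nonneg c]

lemma sgn_pn {a b c : ℝ} (h1 : 0 < a*c) (h2 : b*c < 0) : a*b < 0 := by
  nlinarith [mul_pos h1 (neg_pos.mpr h2), sq_nonneg c]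

/-- A line meets the unit circle in at most two points: if `z` is on the unit
circle and on the line through `a ≠ b` (both on the unit circle), then `z = a`
or `z = b`. -/
lemma line_circle {a b z : ℂ} (ha : ‖a‖ = 1) (hb : ‖b‖ = 1)
    (hz : ‖z‖ = 1) (hab : a ≠ b) (h : ((z - a)/(b - a)).im = 0) :
    z = a ∨ z = b := by
  have hba : b - a ≠ 0 := sub_ne_zero.mpr (Ne.symm hab)
  set t : ℝ := ((z - a)/(b - a)).re with ht
  have hw : z - a = (t : ℂ) * (b - a) := by
    have h2 : ((z - a)/(b-a)) = (t:ℂ) := by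
      apply Complex.ext
      · simp [ht]
      · simp [h]
    rw [div_eq_iff hba] at h2
    rw [h2]
  have e1 : z.re = a.re + t * (b.re - a.re) := by
    have := congrArg Complex.re hw; simp at this; linarith
  have e2 : z.im = a.im + t * (b.im - a.im) := by
    have := congrArg Complex.im hw; simp at this; linarith
  have na : a.re^2 + a.im^2 = 1 := by
    have := Complex.sq_norm a; rw [ha] at this; simpa [Complex.normSq_apply, sq] using this.symm
  have nb : b.re^2 + b.im^2 = 1 := by
    have := Complex.sq_norm b; rw [hb] at this; simpa [Complex.normSq_apply, sq] using this.symm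
  have nz : z.re^2 + z.im^2 = 1 := by
    have := Complex.sq_norm z; rw [hz] at this; simpa [Complex.normSq_apply, sq] using this.symm
  rw [e1, e2] at nz
  have hD : 0 < (b.re - a.re)^2 + (b.im - a.im)^2 := by
    have h0 : Complex.normSq (b - a) ≠ 0 := by simpa using hba
    have heq : Complex.normSq (b-a) = (b.re - a.re)^2 + (b.im - a.im)^2 := by
      simp [Complex.normSq_apply, sq]
    rcases (lt_or_eq_of_le (Complex.normSq_nonneg (b-a))) with hlt | heqz
    · rw [heq] at hlt; exact hlt
    · exact absurd heqz.symm h0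
  have key : t * (t - 1) * ((b.re - a.re)^2 + (b.im - a.im)^2) = 0 := by
    linear_combination nz + (t - 1) * na - t * nb
  rcases mul_eq_zero.mp key with h' | h'
  · rcases mul_eq_zero.mp h' with h0 | h1
    · left
      have hz0 : z - a = 0 := by rw [hw, h0]; simp
      exact sub_eq_zero.mp hz0
    · right
      have ht1 : t = 1 := by linarith
      have hz1 : z - a = b - a := by rw [hw, ht1]; simp
      exact sub_left_inj.mp hz1
  · linarith

/-- given a biinfinite sequence of pairwise disjoint geodesics
`(ξ_n, ξ_n')` of the Poincaré disk such that, for every `n`, the geodesics with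
index `> n` lie on one side of `(ξ_n, ξ_n')` and those with index `< n` on the
other side, there are distinct boundary points `ξ₋∞, ξ₊∞` such that the geodesic
`(ξ₋∞, ξ₊∞)` crosses every `(ξ_n, ξ_n')`, in the order of increasing `n`. -/
theorem stmt5 (ξ ξ' : ℤ → ℂ)
    (hbd : ∀ n, ξ n ∈ BdryCircle ∧ ξ' n ∈ BdryCircle)
    (hne : ∀ n, ξ n ≠ ξ' n)
    (hdisj : ∀ m n, m ≠ n →
      SameSideChord (ξ n) (ξ' n) (ξ m) (ξ' m))
    (hnest : ∀ n m m' : ℤ, m' < n → n < m →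
      SeparatedByChord (ξ n) (ξ' n) (ξ m) (ξ m')) :
    ∃ ξm ξp : ℂ, ξm ∈ BdryCircle ∧ ξp ∈ BdryCircle ∧ ξm ≠ ξp ∧
      (∀ n, SeparatedByChord (ξ n) (ξ' n) ξm ξp) ∧
      (∀ m n, m < n →
        SameSideChord (ξ m) (ξ' m) (ξ n) ξp ∧
        SameSideChord (ξ n) (ξ' n) (ξ m) ξm) := by
  classical
  set f : ℤ → ℂ → ℝ := fun n z => ((z - ξ n) / (ξ' n - ξ n)).im with hf
  have Hnest : ∀ n m m' : ℤ, m' < n → n < m → f n (ξ m) * f n (ξ m') < 0 := by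
    intro n m m' h1 h2; exact hnest n m m' h1 h2
  have Hdisj : ∀ m n : ℤ, m ≠ n → 0 < f n (ξ m) * f n (ξ' m) := by
    intro m n h; exact hdisj m n h
  set ε : ℤ → ℝ := fun n => if 0 < f n (ξ (n+1)) then 1 else -1 with hε
  have hε2 : ∀ n, ε n * ε n = 1 := by
    intro n; by_cases h : 0 < f n (ξ (n+1)) <;> simp [hε, h]
  have hεp : ∀ n, 0 < ε n * f n (ξ (n+1)) := by
    intro n
    have h1 : f n (ξ (n+1)) * f n (ξ (n-1)) < 0 :=
      Hnest n (n+1) (n-1) (by omega) (by omega)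
    have hne0 : f n (ξ (n+1)) ≠ 0 := by
      intro h0; rw [h0] at h1; simp at h1
    by_cases h : 0 < f n (ξ (n+1))
    · simp only [hε, if_pos h]; linarith
    · simp only [hε, if_neg h]
      have : f n (ξ (n+1)) < 0 := lt_of_le_of_ne (not_lt.mp h) hne0
      nlinarith
  -- P1 : endpoints of later geodesics lie on the positive side
  have P1 : ∀ n m : ℤ, n < m → 0 < ε n * f n (ξ m) := by
    intro n m hnm
    have h1 : f n (ξ m) * f n (ξ (n-1)) < 0 := Hnest n m (n-1) (by omega) hnm
    have h2 : f n (ξ (n+1)) * f n (ξ (n-1)) < 0 :=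
      Hnest n (n+1) (n-1) (by omega) (by omega)
    have h3 : 0 < f n (ξ m) * f n (ξ (n+1)) := sgn_nn h1 h2
    exact sgn_pp (hεp n) h3
  have P1' : ∀ n m : ℤ, n < m → 0 < ε n * f n (ξ' m) := by
    intro n m hnm
    have h1 : 0 < f n (ξ m) * f n (ξ' m) := Hdisj m n (by omega)
    have h2 : 0 < f n (ξ' m) * f n (ξ m) := by
      linarith [mul_comm (f n (ξ m)) (f n (ξ' m))]
    exact sgn_pp (P1 n m hnm) h2
  -- P2 : endpoints of earlier geodesics lie on the negative side
  have P2 : ∀ n m : ℤ, m < n → ε n * f n (ξ m) < 0 := by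
    intro n m hmn
    have h1 : f n (ξ (n+1)) * f n (ξ m) < 0 := Hnest n (n+1) m hmn (by omega)
    have h2 : f n (ξ m) * f n (ξ (n+1)) < 0 := by
      linarith [mul_comm (f n (ξ (n+1))) (f n (ξ m))]
    exact sgn_pn (hεp n) h2
  have P2' : ∀ n m : ℤ, m < n → ε n * f n (ξ' m) < 0 := by
    intro n m hmn
    have h1 : 0 < f n (ξ m) * f n (ξ' m) := Hdisj m n (by omega)
    have h4 : 0 < f n (ξ' m) * f n (ξ m) := by
      linarith [mul_comm (f n (ξ m)) (f n (ξ' m))]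
    have h5 : f n (ξ' m) * ε n < 0 := sgn_pn h4 (P2 n m hmn)
    linarith [mul_comm (f n (ξ' m)) (ε n)]
  -- compactness of the circle
  have hcirc : IsCompact BdryCircle := by
    have heq : BdryCircle = Metric.sphere (0:ℂ) 1 := by
      ext z
      simp [BdryCircle, Complex.dist_eq]
    rw [heq]
    exact isCompact_sphere 0 1
  have hcont : ∀ n, Continuous (fun z => ε n * f n z) := by
    intro n
    apply Continuous.mul continuous_const
    exact Complex.continuous_im.comp ((continuous_id.sub continuous_const).div_const _)
  -- find ξ₊∞
  obtain ⟨zp, hzp_mem, hzp⟩ :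
      (BdryCircle ∩ ⋂ n : ℤ, {z | 0 ≤ ε n * f n z}).Nonempty := by
    apply hcirc.inter_iInter_nonempty
    · intro n
      exact isClosed_le continuous_const (hcont n)
    · intro u
      set M : ℤ := ((u.sup fun i => i.toNat : ℕ) : ℤ) + 1 with hM
      refine ⟨ξ M, (hbd M).1, ?_⟩
      simp only [Set.mem_iInter, Set.mem_setOf_eq]
      intro i hi
      have hiM : i < M := by
        have h1 : i ≤ (i.toNat : ℤ) := Int.self_le_toNat i
        have h2 : i.toNat ≤ u.sup fun i => i.toNat := Finset.le_sup hi
        omega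
      exact (P1 i M hiM).le
  -- find ξ₋∞
  obtain ⟨zm, hzm_mem, hzm⟩ :
      (BdryCircle ∩ ⋂ n : ℤ, {z | ε n * f n z ≤ 0}).Nonempty := by
    apply hcirc.inter_iInter_nonempty
    · intro n
      exact isClosed_le (hcont n) continuous_const
    · intro u
      set M : ℤ := -(((u.sup fun i => (-i).toNat : ℕ) : ℤ) + 1) with hM
      refine ⟨ξ M, (hbd M).1, ?_⟩
      simp only [Set.mem_iInter, Set.mem_setOf_eq]
      intro i hi
      have hiM : M < i := by
        have h1 : -i ≤ ((-i).toNat : ℤ) := Int.self_le_toNat (-i)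
        have h2 : (-i).toNat ≤ u.sup fun i => (-i).toNat := Finset.le_sup (f := fun i => (-i).toNat) hi
        omega
      exact (P2 i M hiM).le
  rw [Set.mem_iInter] at hzp hzm
  simp only [Set.mem_setOf_eq] at hzp hzm
  have hεne : ∀ n, ε n ≠ 0 := by
    intro n h0
    have := hεp n
    rw [h0] at this; simp at this
  -- strict positivity on zp
  have hzp' : ∀ n, 0 < ε n * f n zp := by
    intro n
    rcases lt_or_eq_of_le (hzp n) with h | h
    · exact h
    · exfalso
      have hf0 : f n zp = 0 := by
        rcases mul_eq_zero.mp h.symm with h' | h'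
        · exact absurd h' (hεne n)
        · exact h'
      rcases line_circle (hbd n).1 (hbd n).2 hzp_mem (hne n) hf0 with h' | h'
      · have hlt := P2 (n+1) n (by omega)
        rw [← h'] at hlt
        linarith [hzp (n+1)]
      · have hlt := P2' (n+1) n (by omega)
        rw [← h'] at hlt
        linarith [hzp (n+1)]
  -- strict negativity on zm
  have hzm' : ∀ n, ε n * f n zm < 0 := by
    intro n
    rcases lt_or_eq_of_le (hzm n) with h | h
    · exact h
    · exfalso
      have hf0 : f n zm = 0 := by
        rcases mul_eq_zero.mp h with h' | h'
        · exact absurd h' (hεne n)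
        · exact h'
      rcases line_circle (hbd n).1 (hbd n).2 hzm_mem (hne n) hf0 with h' | h'
      · have hlt := P1 (n-1) n (by omega)
        rw [← h'] at hlt
        linarith [hzm (n-1)]
      · have hlt := P1' (n-1) n (by omega)
        rw [← h'] at hlt
        linarith [hzm (n-1)]
  -- product conversion via ε² = 1
  have key : ∀ n (x y : ℝ), x * y = (ε n * x) * (ε n * y) := by
    intro n x y
    linear_combination (-(x*y)) * hε2 n
  refine ⟨zm, zp, hzm_mem, hzp_mem, ?_, ?_, ?_⟩
  · intro heq
    have h1 := hzp' 0
    have h2 := hzm' 0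
    rw [heq] at h2
    linarith
  · intro n
    show f n zm * f n zp < 0
    rw [key n]
    exact mul_neg_of_neg_of_pos (hzm' n) (hzp' n)
  · intro m n hmn
    constructor
    · show 0 < f m (ξ n) * f m zp
      rw [key m]
      exact mul_pos (P1 m n hmn) (hzp' m)
    · show 0 < f n (ξ m) * f n zm
      rw [key n]
      exact mul_pos_of_neg_of_neg (P2 n m hmn) (hzm' n)
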